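/- arXiv:math/0503435 — 2 statements merged into one kernel-verified Lean document; each statement's English description precedes it below -/
import Mathlib

section
/- The map φ: E_{n−1}^{−1} → GL(2ⁿ, ℂ) sending xᵢ to gᵢ = I₂^{⊗(i−1)}⊗R²⊗I₂^{⊗(n−i−1)} is an injective group homomorphism; in particular the group generated by g₁,…,g_{n−1} is isomorphic to E_{n−1}^{−1} and has order 2ⁿ. -/
open Matrix Complex

/-- The 4×4 matrix `R = (1/√2)·[[1,0,0,1],[0,1,-1,0],[0,1,1,0],[-1,0,0,1]]`. -/
noncomputable def R4 : Matrix (Fin 4) (Fin 4) ℂ :=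
  ((Real.sqrt 2 : ℝ) : ℂ)⁻¹ • !![1, 0, 0, 1; 0, 1, -1, 0; 0, 1, 1, 0; -1, 0, 0, 1]

/-- `R` as a matrix on `ℂ² ⊗ ℂ²`, indexed by pairs; `p.1` is the first tensor
factor (the paper's basis ordering makes the second factor the major index). -/
noncomputable def R : Matrix (Fin 2 × Fin 2) (Fin 2 × Fin 2) ℂ := fun p q =>
  R4 ⟨p.1.val + 2 * p.2.val, by have := p.1.isLt; have := p.2.isLt; omega⟩
     ⟨q.1.val + 2 * q.2.val, by have := q.1.isLt; have := q.2.isLt; omega⟩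

/-- The operator `I₂^{⊗ i} ⊗ M ⊗ I₂^{⊗ (n-i-2)}` acting on `(ℂ²)^{⊗ n}`
(0-indexed: `M` acts on tensor factors `i` and `i+1`). -/
noncomputable def pairOp (n i : ℕ) (M : Matrix (Fin 2 × Fin 2) (Fin 2 × Fin 2) ℂ) :
    Matrix (Fin n → Fin 2) (Fin n → Fin 2) ℂ :=
  if h : i + 1 < n then fun x y =>
    M (x ⟨i, Nat.lt_of_succ_lt h⟩, x ⟨i + 1, h⟩) (y ⟨i, Nat.lt_of_succ_lt h⟩, y ⟨i + 1, h⟩) *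
      ∏ j : Fin n, if (j : ℕ) = i ∨ (j : ℕ) = i + 1 then 1 else if x j = y j then 1 else 0
  else 0

/-- `gMat n i = I₂^{⊗ i} ⊗ R² ⊗ I₂^{⊗ (n-i-2)}` (0-indexed: `gMat n i` is the
paper's `g_{i+1}`, acting on tensor factors `i` and `i+1`). -/
noncomputable def gMat (n i : ℕ) : Matrix (Fin n → Fin 2) (Fin n → Fin 2) ℂ :=
  pairOp n i (R * R)

/-- Relators for the group `E_m^ν`: generators are `none` (the central element `-1`)
and `some i` (the generator `xᵢ`, 0-indexed); relations are `(-1)² = 1`, `-1` central,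
`xᵢ² = ν`, far commutation `xᵢxⱼ = xⱼxᵢ` for `|i-j| ≥ 2`, and adjacent
anticommutation `x_{i+1}xᵢ = (-1)·xᵢx_{i+1}`. -/
def Erel (m : ℕ) (ν : ℤˣ) : Set (FreeGroup (Option (Fin m))) :=
  {FreeGroup.of none ^ 2} ∪
    {r | ∃ i : Fin m, r = FreeGroup.of none * FreeGroup.of (some i) *
        (FreeGroup.of none)⁻¹ * (FreeGroup.of (some i))⁻¹} ∪
    {r | ∃ i : Fin m, r = FreeGroup.of (some i) ^ 2 *
        (if ν = 1 then 1 else FreeGroup.of none)⁻¹} ∪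
    {r | ∃ i j : Fin m, (i : ℕ) + 2 ≤ (j : ℕ) ∧ r = FreeGroup.of (some i) *
        FreeGroup.of (some j) * (FreeGroup.of (some i))⁻¹ * (FreeGroup.of (some j))⁻¹} ∪
    {r | ∃ i j : Fin m, (j : ℕ) = (i : ℕ) + 1 ∧ r = FreeGroup.of (some j) *
        FreeGroup.of (some i) *
        (FreeGroup.of none * FreeGroup.of (some i) * FreeGroup.of (some j))⁻¹}

/-- The group `E_m^ν`. -/
abbrev Egrp (m : ℕ) (ν : ℤˣ) := PresentedGroup (Erel m ν)

/-- The central element `-1` of `E_m^ν`. -/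
def neg1 (m : ℕ) (ν : ℤˣ) : Egrp m ν := PresentedGroup.of none

/-- The generator `x_{i+1}` of `E_m^ν` (0-indexed: `xgen m ν i` is the paper's `x_{i+1}`). -/
def xgen (m : ℕ) (ν : ℤˣ) (i : Fin m) : Egrp m ν := PresentedGroup.of (some i)

namespace S18
open Finset


/-- coercion Fin 2 → ZMod 2 -/
def c2 : Fin 2 → ZMod 2 := fun t => if t = 0 then 0 else 1

/-- inverse coercion -/
def c2i : ZMod 2 → Fin 2 := fun w => if w = 0 then 0 else 1

/-- sign character -/
noncomputable def sgn : ZMod 2 → ℂ := fun s => if s = 0 then 1 else -1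

lemma c2_c2i (w : ZMod 2) : c2 (c2i w) = w := by revert w; decide
lemma c2_inj : Function.Injective c2 := by decide
lemma c2i_eq_zero {w : ZMod 2} (h : c2i w = 0) : w = 0 := by revert h; revert w; decide
lemma c2_flip {a b : Fin 2} : c2 a = c2 b + 1 ↔ a ≠ b := by revert a b; decide
lemma zmod2_cases (z : ZMod 2) : z = 0 ∨ z = 1 := by revert z; decide
lemma zadd_self (z : ZMod 2) : z + z = 0 := by revert z; decide

lemma sgn_add (s t : ZMod 2) : sgn (s + t) = sgn s * sgn t := by
  have h : (1 + 1 : ZMod 2) = 0 := by decide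
  rcases zmod2_cases s with rfl | rfl <;> rcases zmod2_cases t with rfl | rfl <;>
    simp [sgn, h] <;> norm_num
lemma sgn_ne_zero (s : ZMod 2) : sgn s ≠ 0 := by
  rcases zmod2_cases s with h | h <;> subst h <;> norm_num [sgn]
lemma sgn_eq_one {s : ZMod 2} (h : sgn s = 1) : s = 0 := by
  rcases zmod2_cases s with h' | h' <;> subst h' <;> [rfl; norm_num [sgn] at h]

/-- extend a `Fin m`-indexed vector to `ℕ` by zero -/
def ex {m : ℕ} (a : Fin m → ZMod 2) : ℕ → ZMod 2 := fun j => if h : j < m then a ⟨j, h⟩ else 0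

lemma ex_apply {m : ℕ} (a : Fin m → ZMod 2) (i : Fin m) : ex a i.val = a i := by
  simp [ex, i.isLt]

lemma ex_add {m : ℕ} (a b : Fin m → ZMod 2) (j : ℕ) : ex (a + b) j = ex a j + ex b j := by
  unfold ex; split <;> simp

lemma ex_zero {m : ℕ} (j : ℕ) : ex (0 : Fin m → ZMod 2) j = 0 := by
  unfold ex; split <;> simp

lemma ex_single {m : ℕ} (i : Fin m) (j : ℕ) :
    ex (Pi.single i (1 : ZMod 2)) j = if j = i.val then 1 else 0 := by
  unfold ex
  have hi := i.isLt
  by_cases h : j < m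
  · rw [dif_pos h, Pi.single_apply]
    have he : ((⟨j, h⟩ : Fin m) = i) ↔ j = i.val := by simp [Fin.ext_iff]
    by_cases hc : j = i.val
    · rw [if_pos (he.mpr hc), if_pos hc]
    · rw [if_neg (fun hh => hc (he.mp hh)), if_neg hc]
  · rw [dif_neg h, if_neg (by omega)]

/-- the "difference" vector: `vv b j = b j + b (j-1)` -/
def vv (b : ℕ → ZMod 2) : ℕ → ZMod 2 := fun j => b j + if j = 0 then 0 else b (j - 1)

lemma vv_add (a b : ℕ → ZMod 2) (j : ℕ) : vv (fun k => a k + b k) j = vv a j + vv b j := by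
  unfold vv; split <;> ring

lemma vv_zero (j : ℕ) : vv (fun _ => 0) j = 0 := by unfold vv; split <;> simp

lemma vv_single {m : ℕ} (i : Fin m) (j : ℕ) :
    vv (ex (Pi.single i (1 : ZMod 2))) j = if j = i.val ∨ j = i.val + 1 then 1 else 0 := by
  unfold vv
  have hi := i.isLt
  rw [ex_single]
  by_cases h0 : j = 0
  · subst h0
    rw [if_pos rfl, add_zero]
    by_cases h : (0:ℕ) = i.val
    · rw [if_pos h, if_pos (Or.inl h)]
    · rw [if_neg h, if_neg (by omega)]
  · rw [if_neg h0, ex_single]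
    by_cases h1 : j = i.val
    · rw [if_pos h1, if_neg (by omega), if_pos (Or.inl h1), add_zero]
    · rw [if_neg h1]
      by_cases h2 : j - 1 = i.val
      · rw [if_pos h2, if_pos (by omega), zero_add]
      · rw [if_neg h2, if_neg (by omega), add_zero]

/-- the sign-cocycle bilinear form -/
def bet {m : ℕ} (a b : Fin m → ZMod 2) : ZMod 2 :=
  ∑ j ∈ range m, (ex a j + ex a (j + 1)) * ex b j

lemma bet_add_left {m : ℕ} (a a' b : Fin m → ZMod 2) :
    bet (a + a') b = bet a b + bet a' b := by
  unfold bet; rw [← Finset.sum_add_distrib]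
  exact Finset.sum_congr rfl fun j _ => by rw [ex_add, ex_add]; ring

lemma bet_add_right {m : ℕ} (a b b' : Fin m → ZMod 2) :
    bet a (b + b') = bet a b + bet a b' := by
  unfold bet; rw [← Finset.sum_add_distrib]
  exact Finset.sum_congr rfl fun j _ => by rw [ex_add]; ring

lemma bet_zero_left {m : ℕ} (b : Fin m → ZMod 2) : bet 0 b = 0 :=
  Finset.sum_eq_zero fun j _ => by rw [ex_zero, ex_zero]; ring

lemma bet_zero_right {m : ℕ} (a : Fin m → ZMod 2) : bet a 0 = 0 :=
  Finset.sum_eq_zero fun j _ => by rw [ex_zero]; ring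

lemma bet_single_left {m : ℕ} (j : Fin m) (b : Fin m → ZMod 2) :
    bet (Pi.single j 1) b = ex b j.val + if j.val = 0 then 0 else ex b (j.val - 1) := by
  unfold bet
  have : ∀ k ∈ range m, (ex (Pi.single j (1:ZMod 2)) k + ex (Pi.single j (1:ZMod 2)) (k+1)) * ex b k
      = (if k = j.val then ex b j.val else 0) + (if k = j.val - 1 ∧ 1 ≤ j.val then ex b (j.val - 1) else 0) := by
    intro k _
    rw [ex_single, ex_single]
    by_cases h1 : k = j.val
    · rw [if_pos h1, if_neg (by omega), if_pos h1, if_neg (by omega), h1]; ring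
    · rw [if_neg h1, if_neg h1]
      by_cases h2 : k + 1 = j.val
      · rw [if_pos h2, if_pos (by omega)]
        have : j.val - 1 = k := by omega
        rw [this]; ring
      · rw [if_neg h2, if_neg (by omega)]; ring
  rw [Finset.sum_congr rfl this, Finset.sum_add_distrib, Finset.sum_ite_eq' (range m) j.val,
    if_pos (by simp [j.isLt])]
  congr 1
  by_cases hj : 1 ≤ j.val
  · rw [if_neg (by omega)]
    have : ∀ k ∈ range m, (if k = j.val - 1 ∧ 1 ≤ j.val then ex b (j.val - 1) else 0)
        = if k = j.val - 1 then ex b (j.val - 1) else 0 := by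
      intro k _; by_cases h : k = j.val - 1 <;> simp [h, hj]
    rw [Finset.sum_congr rfl this, Finset.sum_ite_eq' (range m) (j.val - 1),
      if_pos (by simp; omega)]
  · rw [if_pos (by omega)]
    exact Finset.sum_eq_zero fun k _ => by rw [if_neg (by omega)]

lemma bet_single_right {m : ℕ} (a : Fin m → ZMod 2) (j : Fin m) :
    bet a (Pi.single j 1) = ex a j.val + ex a (j.val + 1) := by
  unfold bet
  have : ∀ k ∈ range m, (ex a k + ex a (k+1)) * ex (Pi.single j (1:ZMod 2)) k
      = if k = j.val then ex a j.val + ex a (j.val + 1) else 0 := by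
    intro k _
    rw [ex_single]
    by_cases h : k = j.val
    · rw [if_pos h, if_pos h, h]; ring
    · rw [if_neg h, if_neg h]; ring
  rw [Finset.sum_congr rfl this, Finset.sum_ite_eq' (range m) j.val, if_pos (by simp [j.isLt])]

/-- key reindexing identity: `∑ a_j * vv(b)_j = bet a b` -/
lemma sum_vv {m : ℕ} (hm : 1 ≤ m) (a b : Fin m → ZMod 2) :
    ∑ j ∈ range m, ex a j * vv (ex b) j = bet a b := by
  unfold bet vv
  have e1 : ∀ j ∈ range m, ex a j * (ex b j + if j = 0 then 0 else ex b (j-1))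
      = ex a j * ex b j + (if j = 0 then 0 else ex a j * ex b (j-1)) := by
    intro j _; split <;> ring
  have e2 : ∀ j ∈ range m, (ex a j + ex a (j+1)) * ex b j
      = ex a j * ex b j + ex a (j+1) * ex b j := fun j _ => by ring
  rw [Finset.sum_congr rfl e1, Finset.sum_congr rfl e2, Finset.sum_add_distrib,
    Finset.sum_add_distrib]
  congr 1
  obtain ⟨k, rfl⟩ : ∃ k, m = k + 1 := ⟨m - 1, by omega⟩
  rw [Finset.sum_range_succ' (fun j => if j = 0 then (0:ZMod 2) else ex a j * ex b (j-1)) k,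
    Finset.sum_range_succ (fun j => ex a (j+1) * ex b j) k]
  have hz : ex a (k+1) = 0 := by unfold ex; rw [dif_neg (by omega)]
  rw [hz, zero_mul, add_zero]
  have hc : ∀ j ∈ range k, (if j + 1 = 0 then (0:ZMod 2) else ex a (j+1) * ex b (j+1-1))
      = ex a (j+1) * ex b j := fun j _ => by rw [if_neg (by omega), Nat.add_sub_cancel]
  rw [Finset.sum_congr rfl hc, if_pos rfl, add_zero]


lemma bet_single_single {m : ℕ} (i j : Fin m) :
    bet (Pi.single i 1) (Pi.single j 1)
      = (if j.val = i.val then 1 else 0) + (if j.val + 1 = i.val then 1 else 0) := by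
  rw [bet_single_right, ex_single, ex_single]

/-- The concrete model group: `ℤ/2 × (ℤ/2)^m` with cocycle `bet`. -/
@[ext] structure CC (m : ℕ) where
  s : ZMod 2
  a : Fin m → ZMod 2

instance : One (CC m) := ⟨⟨0, 0⟩⟩
instance : Mul (CC m) := ⟨fun x y => ⟨x.s + y.s + bet x.a y.a, x.a + y.a⟩⟩
instance : Inv (CC m) := ⟨fun x => ⟨x.s + bet x.a x.a, x.a⟩⟩

lemma CC.one_def : (1 : CC m) = ⟨0, 0⟩ := rfl
lemma CC.mul_def (x y : CC m) : x * y = ⟨x.s + y.s + bet x.a y.a, x.a + y.a⟩ := rfl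
lemma CC.inv_def (x : CC m) : x⁻¹ = ⟨x.s + bet x.a x.a, x.a⟩ := rfl

lemma pi_add_self (a : Fin m → ZMod 2) : a + a = 0 := funext fun i => zadd_self (a i)

instance : Group (CC m) where
  mul_assoc x y z := by
    simp only [CC.mul_def, CC.mk.injEq]
    constructor
    · rw [bet_add_left, bet_add_right]; ring
    · rw [add_assoc]
  one_mul x := by simp only [CC.one_def, CC.mul_def, bet_zero_left, zero_add, add_zero]
  mul_one x := by simp only [CC.one_def, CC.mul_def, bet_zero_right, add_zero, zero_add]
  inv_mul_cancel x := by
    simp only [CC.inv_def, CC.mul_def, CC.one_def, CC.mk.injEq]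
    refine ⟨?_, pi_add_self _⟩
    have h : ∀ u v : ZMod 2, u + v + u + v = 0 := by decide
    exact h _ _

lemma CC_sq_one (x : CC m) (h : x.a = 0) : x * x = 1 := by
  rw [CC.mul_def, CC.one_def, h, bet_zero_left, add_zero, zadd_self, pi_add_self]


def B4 : Matrix (Fin 4) (Fin 4) ℂ := !![0,0,0,1; 0,0,-1,0; 0,1,0,0; -1,0,0,0]

lemma R4_sq : R4 * R4 = B4 := by
  have hc : (((Real.sqrt 2 : ℝ) : ℂ)⁻¹) * (((Real.sqrt 2 : ℝ) : ℂ)⁻¹) = (2 : ℂ)⁻¹ := by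
    rw [← mul_inv]
    congr 1
    norm_cast
    exact Real.mul_self_sqrt (by norm_num)
  unfold R4 B4
  rw [Matrix.smul_mul, Matrix.mul_smul, smul_smul, hc]
  ext i j
  fin_cases i <;> fin_cases j <;>
    simp [Matrix.mul_apply, Fin.sum_univ_four, Matrix.vecHead, Matrix.vecTail] <;> norm_num

def e22 : Fin 2 × Fin 2 ≃ Fin 4 where
  toFun p := ⟨p.1.val + 2 * p.2.val, by have := p.1.isLt; have := p.2.isLt; omega⟩
  invFun k := (⟨k.val % 2, by omega⟩, ⟨k.val / 2, by have := k.isLt; omega⟩)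
  left_inv p := by
    obtain ⟨p1, p2⟩ := p
    fin_cases p1 <;> fin_cases p2 <;> rfl
  right_inv k := by fin_cases k <;> rfl

lemma R_eq : R = R4.submatrix e22 e22 := rfl

lemma RR_apply (p q : Fin 2 × Fin 2) :
    (R * R) p q = if p.1 ≠ q.1 ∧ p.2 ≠ q.2 then (if p.1 = 0 then 1 else -1) else 0 := by
  rw [R_eq, Matrix.submatrix_mul_equiv, R4_sq]
  obtain ⟨p1, p2⟩ := p
  obtain ⟨q1, q2⟩ := q
  fin_cases p1 <;> fin_cases p2 <;> fin_cases q1 <;> fin_cases q2 <;>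
    simp [B4, e22, Matrix.submatrix_apply, Matrix.vecHead, Matrix.vecTail] <;> norm_num



lemma sgn_zero : sgn (0 : ZMod 2) = 1 := by simp [sgn]
lemma c2_zero : c2 (0 : Fin 2) = 0 := by decide
lemma c2_eq_iff {a b : Fin 2} : c2 a = c2 b ↔ a = b := by revert a b; decide

lemma sign_flip : ∀ u w : Fin 2, u ≠ w →
    (if u = (0 : Fin 2) then (1 : ℂ) else -1) = sgn (1 + c2 w) := by
  intro u w h
  fin_cases u <;> fin_cases w <;>
    simp_all [sgn, c2, show (1 + 1 : ZMod 2) = 0 from by decide] <;> norm_num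


/-- extension of a Fin-2-vector `y` to `ℕ → ZMod 2` -/
def exF {n : ℕ} (y : Fin n → Fin 2) : ℕ → ZMod 2 := fun j => if h : j < n then c2 (y ⟨j, h⟩) else 0

lemma exF_lt {n : ℕ} (y : Fin n → Fin 2) {j : ℕ} (h : j < n) : exF y j = c2 (y ⟨j, h⟩) :=
  dif_pos h

/-- the signed-permutation matrix attached to an element of `CC (n-1)` -/
noncomputable def G {n : ℕ} (c : CC (n - 1)) : Matrix (Fin n → Fin 2) (Fin n → Fin 2) ℂ :=
  fun x y => (if ∀ j : Fin n, c2 (x j) = c2 (y j) + vv (ex c.a) j.val then 1 else 0) *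
    sgn (c.s + ∑ j ∈ range (n - 1), ex c.a j * (1 + exF y j))

lemma G_mul {n : ℕ} (hn : 2 ≤ n) (c c' : CC (n - 1)) : G c * G c' = G (c * c') := by
  ext x z
  rw [Matrix.mul_apply]
  set y₀ : Fin n → Fin 2 := fun j => c2i (c2 (z j) + vv (ex c'.a) j.val) with hy₀def
  have hy₀ : ∀ j : Fin n, c2 (y₀ j) = c2 (z j) + vv (ex c'.a) j.val := fun j => c2_c2i _
  rw [Finset.sum_eq_single y₀ (fun y _ hne => by
      have hnc : ¬ (∀ j : Fin n, c2 (y j) = c2 (z j) + vv (ex c'.a) j.val) := fun hall =>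
        hne (funext fun j => c2_inj ((hall j).trans (hy₀ j).symm))
      show G c x y * G c' y z = 0
      unfold G
      rw [if_neg hnc, zero_mul, mul_zero])
    (fun h => absurd (Finset.mem_univ y₀) h)]
  show (if ∀ j : Fin n, c2 (x j) = c2 (y₀ j) + vv (ex c.a) j.val then (1:ℂ) else 0) * _ *
    ((if ∀ j : Fin n, c2 (y₀ j) = c2 (z j) + vv (ex c'.a) j.val then (1:ℂ) else 0) * _) = _
  rw [if_pos hy₀]
  have hvv : ∀ j : ℕ, vv (ex ((c * c').a)) j = vv (ex c.a) j + vv (ex c'.a) j := by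
    intro j
    have h1 : ex (c.a + c'.a) = fun k => ex c.a k + ex c'.a k := funext fun k => ex_add _ _ k
    show vv (ex (c.a + c'.a)) j = _
    rw [h1, vv_add]
  have hcond : (∀ j : Fin n, c2 (x j) = c2 (y₀ j) + vv (ex c.a) j.val) ↔
      (∀ j : Fin n, c2 (x j) = c2 (z j) + vv (ex ((c * c').a)) j.val) := by
    constructor <;> intro h j <;> rw [h j, hy₀ j, hvv j] <;> ring
  have hexFy₀ : ∀ j ∈ range (n - 1), exF y₀ j = exF z j + vv (ex c'.a) j := by
    intro j hj
    have hjn : j < n := by simp at hj; omega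
    rw [exF_lt _ hjn, exF_lt _ hjn, hy₀ ⟨j, hjn⟩]
  have hsgn : sgn (c.s + ∑ j ∈ range (n-1), ex c.a j * (1 + exF y₀ j)) *
      sgn (c'.s + ∑ j ∈ range (n-1), ex c'.a j * (1 + exF z j)) =
      sgn ((c * c').s + ∑ j ∈ range (n-1), ex ((c*c').a) j * (1 + exF z j)) := by
    rw [← sgn_add]
    congr 1
    have e1 : ∀ j ∈ range (n-1), ex c.a j * (1 + exF y₀ j)
        = ex c.a j * (1 + exF z j) + ex c.a j * vv (ex c'.a) j := by
      intro j hj; rw [hexFy₀ j hj]; ring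
    have e3 : ∀ j ∈ range (n-1), ex ((c*c').a) j * (1 + exF z j)
        = ex c.a j * (1 + exF z j) + ex c'.a j * (1 + exF z j) := by
      intro j _
      show ex (c.a + c'.a) j * _ = _
      rw [ex_add]; ring
    rw [Finset.sum_congr rfl e1, Finset.sum_congr rfl e3, Finset.sum_add_distrib,
      Finset.sum_add_distrib, sum_vv (by omega) c.a c'.a]
    show c.s + _ + (c'.s + _) = (c.s + c'.s + bet c.a c'.a) + _
    ring
  rw [one_mul, mul_assoc, hsgn, if_congr hcond rfl rfl]
  rfl

lemma G_one {n : ℕ} : G (1 : CC (n - 1)) = 1 := by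
  ext x y
  simp only [G]
  have h0 : ex ((1 : CC (n-1)).a) = fun _ => 0 := funext fun j => ex_zero j
  have hvv : ∀ j : ℕ, vv (ex ((1 : CC (n-1)).a)) j = 0 := fun j => by rw [h0, vv_zero]
  have hsum : ((1 : CC (n-1)).s + ∑ j ∈ range (n-1), ex ((1 : CC (n-1)).a) j * (1 + exF y j)) = 0 := by
    have h1 : ∑ j ∈ range (n-1), ex ((1 : CC (n-1)).a) j * (1 + exF y j) = 0 :=
      Finset.sum_eq_zero fun j _ => by rw [h0]; ring
    rw [h1, show (1 : CC (n-1)).s = 0 from rfl, add_zero]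
  rw [hsum, sgn_zero, mul_one, Matrix.one_apply]
  refine if_congr ⟨fun h => funext fun j => c2_inj ?_, fun h j => ?_⟩ rfl rfl
  · rw [h j, hvv, add_zero]
  · rw [h, hvv, add_zero]

/-- the representation of the model group by invertible matrices -/
noncomputable def rho (n : ℕ) (hn : 2 ≤ n) :
    CC (n - 1) →* (Matrix (Fin n → Fin 2) (Fin n → Fin 2) ℂ)ˣ where
  toFun c := ⟨G c, G c⁻¹,
    by rw [G_mul hn, mul_inv_cancel, G_one],
    by rw [G_mul hn, inv_mul_cancel, G_one]⟩
  map_one' := Units.ext G_one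
  map_mul' c c' := Units.ext (G_mul hn c c').symm

lemma rho_apply {n : ℕ} (hn : 2 ≤ n) (c : CC (n - 1)) : (rho n hn c : Matrix _ _ ℂ) = G c := rfl

lemma rho_inj {n : ℕ} (hn : 2 ≤ n) : Function.Injective (rho n hn) := by
  rw [injective_iff_map_eq_one]
  intro c hc
  have hG : G c = 1 := congrArg Units.val hc
  -- step 1: the flip vector is zero
  have hvv0 : ∀ j : Fin n, vv (ex c.a) j.val = 0 := by
    set x₀ : Fin n → Fin 2 := fun j => c2i (vv (ex c.a) j.val) with hx₀def
    set z₀ : Fin n → Fin 2 := fun _ => 0 with hz₀def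
    have hc2z : ∀ j : Fin n, c2 (z₀ j) = 0 := fun j => by
      show c2 0 = 0
      exact c2_zero
    have hcond : ∀ j : Fin n, c2 (x₀ j) = c2 (z₀ j) + vv (ex c.a) j.val := fun j => by
      rw [hc2z j, zero_add]; exact c2_c2i _
    have hentry : G c x₀ z₀ = sgn (c.s + ∑ j ∈ range (n-1), ex c.a j * (1 + exF z₀ j)) := by
      simp only [G]; rw [if_pos hcond, one_mul]
    have h1 : G c x₀ z₀ = (1 : Matrix (Fin n → Fin 2) (Fin n → Fin 2) ℂ) x₀ z₀ := by rw [hG]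
    have hxz : x₀ = z₀ := by
      by_contra hne
      rw [Matrix.one_apply_ne hne, hentry] at h1
      exact sgn_ne_zero _ h1
    intro j
    have : x₀ j = z₀ j := congrFun hxz j
    exact c2i_eq_zero this
  -- step 2: the vector part is zero
  have hex0 : ∀ j : ℕ, ex c.a j = 0 := by
    intro j
    induction j with
    | zero =>
      by_cases h : (0:ℕ) < n - 1
      · have := hvv0 ⟨0, by omega⟩
        simpa [vv] using this
      · exact dif_neg (by omega)
    | succ k ih =>
      by_cases h : k + 1 < n
      · have := hvv0 ⟨k+1, h⟩
        simp only [vv] at this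
        rw [if_neg (by omega)] at this
        simp only [Nat.add_sub_cancel] at this
        rw [ih] at this
        rw [add_zero] at this
        exact this
      · exact dif_neg (by omega)
  have ha : c.a = 0 := funext fun i => by
    have := ex_apply c.a i
    rw [hex0] at this
    exact this.symm
  -- step 3: the sign is zero
  have hs : c.s = 0 := by
    set z₀ : Fin n → Fin 2 := fun _ => 0 with hz₀def
    have hcond : ∀ j : Fin n, c2 (z₀ j) = c2 (z₀ j) + vv (ex c.a) j.val := fun j => by
      rw [hvv0 j, add_zero]
    have h1 : G c z₀ z₀ = (1 : Matrix (Fin n → Fin 2) (Fin n → Fin 2) ℂ) z₀ z₀ := by rw [hG]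
    rw [Matrix.one_apply_eq] at h1
    have hsum : ∑ j ∈ range (n-1), ex c.a j * (1 + exF z₀ j) = 0 :=
      Finset.sum_eq_zero fun j _ => by rw [hex0]; ring
    simp only [G] at h1
    rw [if_pos hcond, one_mul, hsum, add_zero] at h1
    exact sgn_eq_one h1
  ext
  · rw [hs]; rfl
  · rw [ha]; rfl


lemma gMat_eq {n : ℕ} (hn : 2 ≤ n) (i : Fin (n - 1)) :
    gMat n i.val = G (⟨0, Pi.single i 1⟩ : CC (n - 1)) := by
  have hi1 : i.val + 1 < n := by have := i.isLt; omega
  have hi0 : i.val < n := by omega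
  ext x y
  show pairOp n i.val (R * R) x y = _
  unfold pairOp
  refine (congrFun (congrFun (dif_pos hi1) x) y).trans ?_
  set i' : Fin n := ⟨i.val, hi0⟩
  set i'' : Fin n := ⟨i.val + 1, hi1⟩
  simp only [G]
  -- sum in the sign
  have hsum : (0 + ∑ j ∈ range (n-1), ex ((⟨0, Pi.single i 1⟩ : CC (n-1)).a) j * (1 + exF y j))
      = 1 + c2 (y i') := by
    rw [zero_add]
    have h1 : ∀ j ∈ range (n-1), ex ((⟨0, Pi.single i 1⟩ : CC (n-1)).a) j * (1 + exF y j)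
        = if j = i.val then 1 + c2 (y i') else 0 := by
      intro j hj
      show ex (Pi.single i 1) j * (1 + exF y j) = _
      rw [ex_single]
      by_cases h : j = i.val
      · rw [if_pos h, if_pos h, one_mul, h, exF_lt y hi0]
      · rw [if_neg h, if_neg h, zero_mul]
    rw [Finset.sum_congr rfl h1, Finset.sum_ite_eq' (range (n-1)) i.val, if_pos (by simp [i.isLt])]
  rw [hsum]
  have hvv : ∀ j : ℕ, vv (ex ((⟨0, Pi.single i 1⟩ : CC (n-1)).a)) j
      = if j = i.val ∨ j = i.val + 1 then 1 else 0 := fun j => vv_single i j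
  by_cases hC : ∀ j : Fin n, c2 (x j) = c2 (y j) + vv (ex ((⟨0, Pi.single i 1⟩ : CC (n-1)).a)) j.val
  · rw [if_pos hC, one_mul]
    have hxi : x i' ≠ y i' := by
      have := hC i'
      rw [hvv, if_pos (Or.inl rfl)] at this
      exact c2_flip.mp this
    have hxi2 : x i'' ≠ y i'' := by
      have := hC i''
      rw [hvv, if_pos (Or.inr rfl)] at this
      exact c2_flip.mp this
    have hprod : (∏ j : Fin n, if (j : ℕ) = i.val ∨ (j : ℕ) = i.val + 1 then (1:ℂ)
        else if x j = y j then 1 else 0) = 1 := by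
      apply Finset.prod_eq_one
      intro j _
      by_cases hj : (j : ℕ) = i.val ∨ (j : ℕ) = i.val + 1
      · rw [if_pos hj]
      · rw [if_neg hj]
        have := hC j
        rw [hvv, if_neg hj, add_zero] at this
        rw [if_pos (c2_eq_iff.mp this)]
    rw [hprod, mul_one, RR_apply]
    simp only []
    rw [if_pos ⟨hxi, hxi2⟩]
    exact sign_flip _ _ hxi
  · rw [if_neg hC, zero_mul]
    push_neg at hC
    obtain ⟨j, hj⟩ := hC
    by_cases hjm : (j : ℕ) = i.val ∨ (j : ℕ) = i.val + 1
    · -- the R² factor vanishes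
      rw [hvv, if_pos hjm] at hj
      have hxy : x j = y j := by
        by_contra hne
        exact hj (c2_flip.mpr hne)
      rw [RR_apply]
      simp only []
      rw [if_neg, zero_mul]
      rcases hjm with h | h
      · have : j = i' := Fin.ext h
        rw [this] at hxy
        intro hcon
        exact hcon.1 hxy
      · have : j = i'' := Fin.ext h
        rw [this] at hxy
        intro hcon
        exact hcon.2 hxy
    · -- one of the identity factors vanishes
      rw [hvv, if_neg hjm, add_zero] at hj
      have hne : x j ≠ y j := fun h => hj (by rw [h])
      rw [Finset.prod_eq_zero (Finset.mem_univ j), mul_zero]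
      rw [if_neg hjm, if_neg hne]


-- ===== the presented group side =====
section Egrp
variable {m : ℕ}

local notation "ng" => neg1 m (-1)
local notation "xg" => xgen m (-1)

lemma rel_one {r : FreeGroup (Option (Fin m))} (hr : r ∈ Erel m (-1)) :
    PresentedGroup.mk (Erel m (-1)) r = 1 :=
  (QuotientGroup.eq_one_iff r).mpr (Subgroup.subset_normalClosure hr)

lemma hneg_sq : ng * ng = 1 := by
  have := rel_one (r := FreeGroup.of (none : Option (Fin m)) ^ 2)
    (Or.inl (Or.inl (Or.inl (Or.inl rfl))))
  rw [map_pow, pow_two] at this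
  exact this

lemma hcent_gen (i : Fin m) : Commute ng (xg i) := by
  have := rel_one (r := FreeGroup.of (none : Option (Fin m)) * FreeGroup.of (some i) *
      (FreeGroup.of none)⁻¹ * (FreeGroup.of (some i))⁻¹)
    (Or.inl (Or.inl (Or.inl (Or.inr ⟨i, rfl⟩))))
  simp only [_root_.map_mul, map_inv] at this
  exact commutatorElement_eq_one_iff_commute.mp this

lemma hsq (i : Fin m) : xg i * xg i = ng := by
  have := rel_one (r := FreeGroup.of (some i) ^ 2 *
      (if (-1 : ℤˣ) = 1 then 1 else FreeGroup.of (none : Option (Fin m)))⁻¹)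
    (Or.inl (Or.inl (Or.inr ⟨i, rfl⟩)))
  rw [if_neg (by decide : ¬(-1 : ℤˣ) = 1)] at this
  rw [_root_.map_mul, map_inv, map_pow, mul_inv_eq_one] at this
  rw [← pow_two]
  exact this

lemma hfar {i j : Fin m} (hij : i.val + 2 ≤ j.val) : Commute (xg i) (xg j) := by
  have := rel_one (r := FreeGroup.of (some i) * FreeGroup.of (some j) *
      (FreeGroup.of (some i))⁻¹ * (FreeGroup.of (some j))⁻¹)
    (Or.inl (Or.inr ⟨i, j, hij, rfl⟩))
  simp only [_root_.map_mul, map_inv] at this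
  exact commutatorElement_eq_one_iff_commute.mp this

lemma hadj {i j : Fin m} (hij : j.val = i.val + 1) : xg j * xg i = ng * xg i * xg j := by
  have := rel_one (r := FreeGroup.of (some j) * FreeGroup.of (some i) *
      (FreeGroup.of (none : Option (Fin m)) * FreeGroup.of (some i) * FreeGroup.of (some j))⁻¹)
    (Or.inr ⟨i, j, hij, rfl⟩)
  simp only [_root_.map_mul, map_inv] at this
  rw [← mul_inv_eq_one]
  exact this

lemma hcent (g : Egrp m (-1)) : Commute ng g := by
  have hg : g ∈ Subgroup.closure (Set.range (PresentedGroup.of : Option (Fin m) → Egrp m (-1))) := by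
    rw [PresentedGroup.closure_range_of]; trivial
  refine Subgroup.closure_induction (p := fun g _ => Commute ng g) (fun x hx => ?_)
    (Commute.one_right _) (fun x y _ _ hx hy => Commute.mul_right hx hy)
    (fun x _ hx => Commute.inv_right hx) hg
  obtain ⟨o, rfl⟩ := hx
  cases o with
  | none => exact Commute.refl _
  | some i => exact hcent_gen i

lemma hng_inv : (ng : Egrp m (-1))⁻¹ = ng := inv_eq_of_mul_eq_one_left hneg_sq

lemma hxg_inv (i : Fin m) : (xg i)⁻¹ = ng * xg i :=
  inv_eq_of_mul_eq_one_left (by rw [mul_assoc, hsq, hneg_sq])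

lemma ng_pow_mod (e : ℕ) : (ng : Egrp m (-1)) ^ e = ng ^ (e % 2) := by
  conv_lhs => rw [← Nat.div_add_mod e 2]
  rw [pow_add, pow_mul, show (ng : Egrp m (-1)) ^ 2 = 1 from by rw [pow_two, hneg_sq],
    one_pow, one_mul]

lemma ng_pow_add (s t : ZMod 2) : (ng : Egrp m (-1)) ^ (s + t).val = ng ^ s.val * ng ^ t.val := by
  rw [← pow_add, ZMod.val_add, ← ng_pow_mod]


/-- partial ordered product of generators -/
def Pup (m : ℕ) (b : Fin m → ZMod 2) : ℕ → Egrp m (-1)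
  | 0 => 1
  | k+1 => Pup m b k * (if h : k < m then xgen m (-1) ⟨k, h⟩ ^ (b ⟨k, h⟩).val else 1)

lemma Pup_zero : ∀ k, Pup m (0 : Fin m → ZMod 2) k = 1
  | 0 => rfl
  | k+1 => by
    rw [Pup, Pup_zero k, one_mul]
    by_cases h : k < m
    · rw [dif_pos h]; simp
    · rw [dif_neg h]

lemma Pup_congr (b b' : Fin m → ZMod 2) (k : ℕ) (h : ∀ i : Fin m, i.val < k → b i = b' i) :
    Pup m b k = Pup m b' k := by
  induction k with
  | zero => rfl
  | succ k ih =>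
    rw [Pup, Pup, ih (fun i hi => h i (by omega))]
    congr 1
    by_cases hkm : k < m
    · simp only [dif_pos hkm]
      rw [h ⟨k, hkm⟩ (Nat.lt_succ_self k)]
    · simp only [dif_neg hkm]

lemma xg_comm_Pup (j : Fin m) (b : Fin m → ZMod 2) :
    ∀ k, k < j.val → Commute (xg j) (Pup m b k)
  | 0, _ => Commute.one_right _
  | k+1, hk => by
    rw [Pup]
    refine Commute.mul_right (xg_comm_Pup j b k (by omega)) ?_
    by_cases h : k < m
    · rw [dif_pos h]
      exact ((hfar (show (⟨k, h⟩ : Fin m).val + 2 ≤ j.val by show k + 2 ≤ j.val; omega)).symm).pow_right _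
    · rw [dif_neg h]
      exact Commute.one_right _

lemma xg_adj_pow {i j : Fin m} (hij : j.val = i.val + 1) (e : ℕ) :
    xg j * xg i ^ e = ng ^ e * (xg i ^ e * xg j) := by
  induction e with
  | zero => simp
  | succ e ih =>
    calc xg j * xg i ^ (e+1) = (xg j * xg i ^ e) * xg i := by rw [pow_succ, ← mul_assoc]
    _ = ng ^ e * (xg i ^ e * (xg j * xg i)) := by rw [ih, mul_assoc, mul_assoc]
    _ = ng ^ e * (xg i ^ e * (ng * (xg i * xg j))) := by rw [hadj hij, mul_assoc]
    _ = ng ^ e * (ng * (xg i ^ e * (xg i * xg j))) := by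
        rw [← mul_assoc (xg i ^ e) ng, ← (hcent (xg i ^ e)).eq, mul_assoc]
    _ = ng ^ (e+1) * (xg i ^ (e+1) * xg j) := by
        rw [pow_succ, pow_succ]
        simp only [mul_assoc]

lemma xg_absorb (j : Fin m) (z : ZMod 2) :
    xg j * xg j ^ z.val = ng ^ z.val * xg j ^ ((1 + z).val) := by
  rcases zmod2_cases z with rfl | rfl
  · rw [show ((1:ZMod 2) + 0) = 1 from by decide]
    simp [ZMod.val_one, ZMod.val_zero]
  · rw [show ((1:ZMod 2) + 1) = 0 from by decide]
    simp [ZMod.val_one, ZMod.val_zero, hsq]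

/-- moving a generator from the left into the ordered product -/
lemma xg_mul_Pup (j : Fin m) (b : Fin m → ZMod 2) :
    ∀ k, j.val < k →
      xg j * Pup m b k =
        ng ^ ((b j).val + if j.val = 0 then 0 else (ex b (j.val - 1)).val) *
          Pup m (Pi.single j 1 + b) k := by
  set b' : Fin m → ZMod 2 := Pi.single j 1 + b with hb'def
  have hbj : ∀ i : Fin m, i.val ≠ j.val → b' i = b i := by
    intro i hi
    rw [hb'def, Pi.add_apply, Pi.single_eq_of_ne (by rwa [ne_eq, Fin.ext_iff]), zero_add]
  have hbj2 : b' j = 1 + b j := by rw [hb'def, Pi.add_apply, Pi.single_eq_same]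
  intro k hk
  induction k with
  | zero => omega
  | succ k ih =>
    rcases Nat.lt_or_ge j.val k with hjk | hjk
    · -- inductive case : j < k, factor k unchanged
      rw [Pup, ← mul_assoc, ih hjk, Pup, mul_assoc]
      congr 2
      by_cases h : k < m
      · rw [dif_pos h, dif_pos h, hbj ⟨k, h⟩ (show k ≠ j.val by omega)]
      · rw [dif_neg h, dif_neg h]
    · -- base case : k = j.val
      have hjlt := j.isLt
      have hkj : k = j.val := by omega
      have hkm : k < m := by omega
      have hfj : (⟨k, hkm⟩ : Fin m) = j := Fin.ext hkj
      rcases Nat.eq_zero_or_pos k with hk0 | hkpos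
      · -- j.val = 0
        subst hk0
        simp only [Pup, dif_pos hkm, hfj, one_mul]
        rw [if_pos (by omega), add_zero, xg_absorb j (b j), hbj2]
      · -- j.val = jp + 1
        obtain ⟨jp, hjpk⟩ : ∃ jp, k = jp + 1 := ⟨k - 1, by omega⟩
        have hjpm : jp < m := by omega
        have hij' : j.val = (⟨jp, hjpm⟩ : Fin m).val + 1 := by show j.val = jp + 1; omega
        have hcm : Commute (xg j) (Pup m b jp) := xg_comm_Pup j b jp (by omega)
        have hPc : Pup m b' jp = Pup m b jp :=
          (Pup_congr b b' jp (fun i hi => (hbj i (by omega)).symm)).symm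
        have hb'jp : b' ⟨jp, hjpm⟩ = b ⟨jp, hjpm⟩ := hbj _ (by show jp ≠ j.val; omega)
        subst hjpk
        simp only [Pup, dif_pos hkm, dif_pos hjpm, hfj, hPc, hb'jp, hbj2]
        rw [if_neg (by omega), show j.val - 1 = jp from by omega,
          show ex b jp = b ⟨jp, hjpm⟩ from dif_pos hjpm]
        set ep := (b ⟨jp, hjpm⟩).val with hepdef
        set Xp := xg ⟨jp, hjpm⟩ ^ ep with hXpdef
        -- now pure group algebra
        calc xg j * (Pup m b jp * Xp * xg j ^ (b j).val)
            = Pup m b jp * (xg j * Xp) * xg j ^ (b j).val := by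
              rw [← mul_assoc, ← mul_assoc, hcm.eq, mul_assoc (Pup m b jp) (xg j) Xp]
          _ = Pup m b jp * (ng ^ ep * (Xp * xg j)) * xg j ^ (b j).val := by
              rw [hXpdef, xg_adj_pow hij' ep]
          _ = ng ^ ep * (Pup m b jp * (Xp * (xg j * xg j ^ (b j).val))) := by
              rw [← mul_assoc (Pup m b jp) (ng ^ ep) (Xp * xg j),
                ← ((hcent (Pup m b jp)).pow_left ep).eq]
              simp only [mul_assoc]
          _ = ng ^ ep * (Pup m b jp * (Xp * (ng ^ (b j).val * xg j ^ ((1 + b j).val)))) := by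
              rw [xg_absorb j (b j)]
          _ = ng ^ ((b j).val + ep) * (Pup m b jp * Xp * xg j ^ ((1 + b j).val)) := by
              simp only [← mul_assoc]
              rw [mul_assoc (ng ^ ep * Pup m b jp) Xp (ng ^ (b j).val),
                ← ((hcent Xp).pow_left ((b j).val)).eq,
                ← mul_assoc (ng ^ ep * Pup m b jp) (ng ^ (b j).val) Xp,
                mul_assoc (ng ^ ep) (Pup m b jp) (ng ^ (b j).val),
                ← ((hcent (Pup m b jp)).pow_left ((b j).val)).eq,
                ← mul_assoc (ng ^ ep) (ng ^ (b j).val) (Pup m b jp),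
                ← pow_add, add_comm ep ((b j).val)]

/-- the images of the generators in `CC m` -/
def fC (m : ℕ) : Option (Fin m) → CC m
  | none => ⟨1, 0⟩
  | some i => ⟨0, Pi.single i 1⟩

lemma hrels : ∀ r ∈ Erel m (-1), FreeGroup.lift (fC m) r = 1 := by
  intro r hr
  rcases hr with ((((h | h) | h) | h) | h)
  · -- (-1)^2 = 1
    rw [Set.mem_singleton_iff] at h
    subst h
    rw [map_pow, FreeGroup.lift_apply_of, pow_two]
    exact CC_sq_one _ rfl
  · -- -1 central
    obtain ⟨i, rfl⟩ := h
    simp only [_root_.map_mul, map_inv, FreeGroup.lift_apply_of]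
    refine commutatorElement_eq_one_iff_commute.mpr ?_
    show fC m none * fC m (some i) = fC m (some i) * fC m none
    simp only [fC, CC.mul_def, CC.mk.injEq]
    rw [bet_zero_left, bet_zero_right]
    exact ⟨by ring, by rw [add_comm]⟩
  · -- x_i^2 = -1
    obtain ⟨i, rfl⟩ := h
    rw [if_neg (by decide : ¬(-1 : ℤˣ) = 1)]
    rw [_root_.map_mul, map_inv, map_pow, FreeGroup.lift_apply_of, FreeGroup.lift_apply_of, mul_inv_eq_one,
      pow_two]
    show fC m (some i) * fC m (some i) = fC m none
    simp only [fC, CC.mul_def, CC.mk.injEq]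
    refine ⟨?_, pi_add_self _⟩
    rw [bet_single_single, if_pos rfl, if_neg (by omega)]
    ring
  · -- far commutation
    obtain ⟨i, j, hij, rfl⟩ := h
    simp only [_root_.map_mul, map_inv, FreeGroup.lift_apply_of]
    refine commutatorElement_eq_one_iff_commute.mpr ?_
    show fC m (some i) * fC m (some j) = fC m (some j) * fC m (some i)
    simp only [fC, CC.mul_def, CC.mk.injEq]
    rw [bet_single_single, bet_single_single, if_neg (by omega), if_neg (by omega),
      if_neg (by omega), if_neg (by omega)]
    exact ⟨rfl, by rw [add_comm]⟩
  · -- adjacent anticommutation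
    obtain ⟨i, j, hij, rfl⟩ := h
    simp only [_root_.map_mul, map_inv, FreeGroup.lift_apply_of]
    rw [mul_inv_eq_one]
    show fC m (some j) * fC m (some i) = fC m none * fC m (some i) * fC m (some j)
    simp only [fC, CC.mul_def, CC.mk.injEq, zero_add, add_zero, bet_zero_left]
    rw [bet_single_single, bet_single_single,
      if_neg (by omega), if_pos hij.symm, if_neg (by omega), if_neg (by omega)]
    exact ⟨by decide, add_comm _ _⟩

/-- the homomorphism to the model group -/
def psi (m : ℕ) : Egrp m (-1) →* CC m := PresentedGroup.toGroup (f := fC m) hrels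

lemma psi_none : psi m ng = ⟨1, 0⟩ := PresentedGroup.toGroup.of hrels
lemma psi_some (i : Fin m) : psi m (xg i) = ⟨0, Pi.single i 1⟩ := PresentedGroup.toGroup.of hrels

/-- the normal form -/
def Nf (m : ℕ) (c : CC m) : Egrp m (-1) := neg1 m (-1) ^ c.s.val * Pup m c.a m

lemma Nf_one : Nf m 1 = 1 := by
  rw [Nf, CC.one_def]
  show ng ^ (0 : ZMod 2).val * Pup m 0 m = 1
  rw [ZMod.val_zero, pow_zero, one_mul, Pup_zero]

lemma Nf_neg_step (c : CC m) : Nf m ((⟨1, 0⟩ : CC m) * c) = ng * Nf m c := by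
  rw [CC.mul_def]
  show ng ^ ((1 + c.s + bet 0 c.a).val) * Pup m (0 + c.a) m = _
  rw [bet_zero_left, add_zero, zero_add, Nf, ng_pow_add, ZMod.val_one, pow_one, mul_assoc]

lemma Nf_x_step (j : Fin m) (c : CC m) :
    Nf m ((⟨0, Pi.single j 1⟩ : CC m) * c) = xg j * Nf m c := by
  rw [CC.mul_def]
  show ng ^ ((0 + c.s + bet (Pi.single j 1) c.a).val) * Pup m (Pi.single j 1 + c.a) m = _
  rw [zero_add, Nf, ← mul_assoc, ((hcent (xg j)).symm.pow_right c.s.val).eq, mul_assoc,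
    xg_mul_Pup j c.a m j.isLt, ← mul_assoc]
  congr 1
  rw [ng_pow_add]
  congr 1
  rw [bet_single_left j c.a, ng_pow_add, ex_apply, pow_add]
  congr 1
  by_cases h : j.val = 0
  · rw [if_pos h, if_pos h]
    rfl
  · rw [if_neg h, if_neg h]

lemma N_psi (g : Egrp m (-1)) : Nf m (psi m g) = g := by
  have key_n : ∀ y : Egrp m (-1), Nf m (psi m y) = y → Nf m (psi m (ng * y)) = ng * y := by
    intro y hy
    rw [_root_.map_mul, psi_none, Nf_neg_step, hy]
  have key_x : ∀ (j : Fin m) (y : Egrp m (-1)),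
      Nf m (psi m y) = y → Nf m (psi m (xg j * y)) = xg j * y := by
    intro j y hy
    rw [_root_.map_mul, psi_some, Nf_x_step, hy]
  have hg : g ∈ Subgroup.closure (Set.range (PresentedGroup.of : Option (Fin m) → Egrp m (-1))) := by
    rw [PresentedGroup.closure_range_of]; trivial
  induction hg using Subgroup.closure_induction_left with
  | one => rw [_root_.map_one, Nf_one]
  | mul_left x hx y hy ih =>
    obtain ⟨o, rfl⟩ := hx
    cases o with
    | none => exact key_n y ih
    | some j => exact key_x j y ih
  | inv_mul_cancel x hx y hy ih =>
    obtain ⟨o, rfl⟩ := hx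
    cases o with
    | none =>
      rw [show (PresentedGroup.of (none : Option (Fin m)))⁻¹ = ng from hng_inv]
      exact key_n y ih
    | some j =>
      rw [show (PresentedGroup.of (some j))⁻¹ = ng * xg j from hxg_inv j, mul_assoc]
      exact key_n _ (key_x j y ih)

lemma psi_Pup (b : Fin m → ZMod 2) :
    ∀ k, k ≤ m → psi m (Pup m b k) = ⟨0, fun i => if i.val < k then b i else 0⟩ := by
  intro k
  induction k with
  | zero =>
    intro _
    rw [show Pup m b 0 = 1 from rfl, _root_.map_one]
    refine CC.ext rfl (funext fun i => ?_)
    show (0 : ZMod 2) = if i.val < 0 then b i else 0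
    rw [if_neg (by omega)]
  | succ k ih =>
    intro hk
    have hkm : k < m := by omega
    rw [Pup, dif_pos hkm, _root_.map_mul, ih (by omega), map_pow, psi_some]
    rcases zmod2_cases (b ⟨k, hkm⟩) with hb | hb
    · rw [hb, ZMod.val_zero, pow_zero, mul_one]
      congr 1
      funext i
      by_cases hik : i.val < k
      · rw [if_pos hik, if_pos (by omega)]
      · rw [if_neg hik]
        by_cases hik2 : i.val < k + 1
        · have : i = ⟨k, hkm⟩ := Fin.ext (show i.val = k by omega)
          rw [if_pos hik2, this, hb]
        · rw [if_neg hik2]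
    · rw [hb, ZMod.val_one, pow_one, CC.mul_def, CC.mk.injEq]
      constructor
      · show (0:ZMod 2) + 0 + bet (fun i : Fin m => if i.val < k then b i else 0)
            (Pi.single ⟨k, hkm⟩ 1) = 0
        rw [bet_single_right]
        show (0:ZMod 2) + 0 + (ex (fun i : Fin m => if i.val < k then b i else 0) k
            + ex (fun i : Fin m => if i.val < k then b i else 0) (k + 1)) = 0
        rw [show ex (fun i : Fin m => if i.val < k then b i else 0) k = 0 from by
            simp only [ex]
            rw [dif_pos hkm]
            exact if_neg (lt_irrefl k)]
        rw [show ex (fun i : Fin m => if i.val < k then b i else 0) (k + 1) = 0 from by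
            simp only [ex]
            by_cases hk1 : k + 1 < m
            · rw [dif_pos hk1]
              exact if_neg (show ¬ k + 1 < k by omega)
            · rw [dif_neg hk1]]
        decide
      · funext i
        simp only [Pi.add_apply, Pi.single_apply]
        by_cases hik : i.val < k
        · rw [if_pos hik, if_pos (show i.val < k + 1 by omega),
            if_neg (show ¬ i = ⟨k, hkm⟩ by rw [Fin.ext_iff]; show ¬ i.val = k; omega), add_zero]
        · by_cases hik2 : i.val < k + 1
          · have hieq : i = ⟨k, hkm⟩ := Fin.ext (show i.val = k by omega)
            rw [if_neg hik, if_pos hik2, if_pos hieq, hieq, hb, zero_add]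
          · rw [if_neg hik, if_neg hik2,
              if_neg (show ¬ i = ⟨k, hkm⟩ by rw [Fin.ext_iff]; show ¬ i.val = k; omega), add_zero]

lemma psi_Nf (c : CC m) : psi m (Nf m c) = c := by
  rw [Nf, _root_.map_mul, map_pow, psi_none, psi_Pup c.a m le_rfl]
  have ha : (fun i : Fin m => if i.val < m then c.a i else 0) = c.a :=
    funext fun i => if_pos i.isLt
  rw [ha]
  rcases zmod2_cases c.s with hs | hs
  · rw [hs, ZMod.val_zero, pow_zero, one_mul]
    exact CC.ext hs.symm rfl
  · rw [hs, ZMod.val_one, pow_one, CC.mul_def, CC.mk.injEq]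
    rw [bet_zero_left]
    constructor
    · show (1 : ZMod 2) + 0 + 0 = c.s
      rw [hs]
      decide
    · show (0 : Fin m → ZMod 2) + c.a = c.a
      rw [zero_add]

lemma psi_bij : Function.Bijective (psi m) :=
  ⟨fun a b h => by rw [← N_psi a, ← N_psi b, h],
   fun c => ⟨Nf m c, psi_Nf c⟩⟩

end Egrp

end S18

/-- the map `φ : E_{n−1}^{−1} → GL(2ⁿ, ℂ)` sending `xᵢ` to
`gᵢ = I₂^{⊗(i−1)}⊗R²⊗I₂^{⊗(n−i−1)}` is an injective group homomorphism; in
particular the group generated by `g₁, …, g_{n−1}` (= the range of `φ`) is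
isomorphic to `E_{n−1}^{−1}` and has order `2ⁿ`. -/
theorem stmt18 (n : ℕ) (hn : 2 ≤ n) :
    ∃ φ : Egrp (n - 1) (-1) →* (Matrix (Fin n → Fin 2) (Fin n → Fin 2) ℂ)ˣ,
      (∀ i : Fin (n - 1),
        (φ (xgen (n - 1) (-1) i) : Matrix (Fin n → Fin 2) (Fin n → Fin 2) ℂ) =
          gMat n (i : ℕ)) ∧
      Function.Injective φ ∧
      Nat.card φ.range = 2 ^ n := by
  have hpsi := S18.psi_bij (m := n - 1)
  refine ⟨(S18.rho n hn).comp (S18.psi (n - 1)), ?_, ?_, ?_⟩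
  · intro i
    show ((S18.rho n hn) ((S18.psi (n - 1)) (xgen (n - 1) (-1) i)) :
      Matrix (Fin n → Fin 2) (Fin n → Fin 2) ℂ) = gMat n (i : ℕ)
    rw [S18.psi_some i, S18.rho_apply hn]
    exact (S18.gMat_eq hn i).symm
  · exact (S18.rho_inj hn).comp hpsi.1
  · have hinj : Function.Injective ((S18.rho n hn).comp (S18.psi (n - 1))) :=
      (S18.rho_inj hn).comp hpsi.1
    have e2 : S18.CC (n - 1) ≃ (ZMod 2) × (Fin (n - 1) → ZMod 2) :=
      ⟨fun c => (c.s, c.a), fun p => ⟨p.1, p.2⟩, fun c => rfl, fun p => rfl⟩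
    calc Nat.card ((S18.rho n hn).comp (S18.psi (n - 1))).range
        = Nat.card (Egrp (n - 1) (-1)) :=
          (Nat.card_congr (MonoidHom.ofInjective hinj).toEquiv).symm
      _ = Nat.card (S18.CC (n - 1)) := Nat.card_congr (Equiv.ofBijective _ hpsi)
      _ = Nat.card ((ZMod 2) × (Fin (n - 1) → ZMod 2)) := Nat.card_congr e2
      _ = 2 ^ n := by
          rw [Nat.card_prod, Nat.card_zmod,
            show Nat.card (Fin (n - 1) → ZMod 2) = 2 ^ (n - 1) from by
              simp [Nat.card_fun, Nat.card_zmod],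
            ← pow_succ']
          congr 1
          omega
end

section
/- Let P_n = (P_s ⊗ P_{σₓ})^{⊗⌊n/2⌋} ⊗ I₂^{⊗(n−2⌊n/2⌋)} with P_s = [[1,i],[i,1]] and P_{σₓ} = [[1,-1],[1,1]]. Then P_n⁻¹ g_{2i+1} P_n = i·(I₂^{⊗2i} ⊗ σ_z ⊗ σ_z ⊗ I₂^{⊗(n−2i−2)}) and P_n⁻¹ g_{2i} P_n = g_{2i}, where gⱼ = I₂^{⊗(j−1)} ⊗ R² ⊗ I₂^{⊗(n−j−1)}. -/
open Matrix Complex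

/-- The operator `I₂^{⊗ j} ⊗ M ⊗ I₂^{⊗ (n-j-1)}` acting on `(ℂ²)^{⊗ n}`
(0-indexed: `M` acts on tensor factor `j`). -/
noncomputable def oneOp (n j : ℕ) (M : Matrix (Fin 2) (Fin 2) ℂ) :
    Matrix (Fin n → Fin 2) (Fin n → Fin 2) ℂ :=
  if h : j < n then fun x y =>
    M (x ⟨j, h⟩) (y ⟨j, h⟩) *
      ∏ l : Fin n, if (l : ℕ) = j then 1 else if x l = y l then 1 else 0
  else 0

noncomputable def Ps : Matrix (Fin 2) (Fin 2) ℂ := !![1, Complex.I; Complex.I, 1]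

def Px : Matrix (Fin 2) (Fin 2) ℂ := !![1, -1; 1, 1]

def sigmaZ : Matrix (Fin 2) (Fin 2) ℂ := !![1, 0; 0, -1]

/-- `Pₙ = (P_s ⊗ P_{σₓ})^{⊗⌊n/2⌋} ⊗ I₂^{⊗(n−2⌊n/2⌋)}`: `P_s` on odd (1-indexed)
tensor slots, `P_{σₓ}` on even slots, identity on the last slot if `n` is odd. -/
noncomputable def Pn (n : ℕ) : Matrix (Fin n → Fin 2) (Fin n → Fin 2) ℂ :=
  fun x y => ∏ j : Fin n,
    if (j : ℕ) % 2 = 1 then Px (x j) (y j)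
    else if (j : ℕ) + 1 < n then Ps (x j) (y j)
    else if x j = y j then 1 else 0

/-! ### Auxiliary infrastructure -/

noncomputable def kron (A B : Matrix (Fin 2) (Fin 2) ℂ) :
    Matrix (Fin 2 × Fin 2) (Fin 2 × Fin 2) ℂ :=
  fun p q => A p.1 q.1 * B p.2 q.2

noncomputable def prodOp (n : ℕ) (P : ℕ → Matrix (Fin 2) (Fin 2) ℂ) :
    Matrix (Fin n → Fin 2) (Fin n → Fin 2) ℂ :=
  fun x y => ∏ j : Fin n, P j (x j) (y j)

noncomputable def mixedOp (n j : ℕ) (M : Matrix (Fin 2 × Fin 2) (Fin 2 × Fin 2) ℂ)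
    (P : ℕ → Matrix (Fin 2) (Fin 2) ℂ) : Matrix (Fin n → Fin 2) (Fin n → Fin 2) ℂ :=
  if h : j + 1 < n then fun x y =>
    M (x ⟨j, Nat.lt_of_succ_lt h⟩, x ⟨j + 1, h⟩) (y ⟨j, Nat.lt_of_succ_lt h⟩, y ⟨j + 1, h⟩) *
      ∏ l : Fin n, if (l : ℕ) = j ∨ (l : ℕ) = j + 1 then 1 else P l (x l) (y l)
  else 0

lemma prodOp_mul (n : ℕ) (P Q : ℕ → Matrix (Fin 2) (Fin 2) ℂ) :
    prodOp n P * prodOp n Q = prodOp n (fun j => P j * Q j) := by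
  ext x y
  simp only [Matrix.mul_apply, prodOp]
  simp only [← Finset.prod_mul_distrib]
  rw [← Fintype.piFinset_univ,
    ← Finset.prod_univ_sum (fun _ => (Finset.univ : Finset (Fin 2)))
      (fun (j : Fin n) a => P j (x j) a * Q j a (y j))]

lemma prodOp_one (n : ℕ) : prodOp n (fun _ => 1) = 1 := by
  ext x y
  simp only [prodOp, Matrix.one_apply]
  by_cases h : x = y
  · subst h; simp
  · rw [if_neg h]
    obtain ⟨j, hj⟩ := Function.ne_iff.mp h
    exact Finset.prod_eq_zero (Finset.mem_univ j) (by rw [if_neg hj])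

lemma mixedOp_smul (n j : ℕ) (c : ℂ) (M : Matrix (Fin 2 × Fin 2) (Fin 2 × Fin 2) ℂ)
    (P : ℕ → Matrix (Fin 2) (Fin 2) ℂ) :
    mixedOp n j (c • M) P = c • mixedOp n j M P := by
  unfold mixedOp
  split_ifs with h
  · ext x y
    simp only [h, ↓reduceDIte, Pi.smul_apply, smul_eq_mul]
    simp only [Matrix.smul_apply, smul_eq_mul]
    rw [mul_assoc]; rfl
  · simp only [h, ↓reduceDIte]; simp

lemma prod_update1 {n : ℕ} (F : Fin n → Fin 2 → ℂ) (w : Fin n → Fin 2) (q : Fin n) (b : Fin 2) :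
    ∏ l : Fin n, F l (Function.update w q b l) = F q b * ∏ l ∈ Finset.univ \ {q}, F l (w l) := by
  have h : (fun l => F l (Function.update w q b l))
      = Function.update (fun l => F l (w l)) q (F q b) := by
    funext l
    by_cases hl : l = q
    · subst hl; simp
    · simp [Function.update_of_ne hl]
  rw [h, Finset.prod_update_of_mem (Finset.mem_univ q)]

lemma prod_update2 {n : ℕ} (F : Fin n → Fin 2 → ℂ) (w : Fin n → Fin 2) (p q : Fin n)
    (hpq : p ≠ q) (a b : Fin 2) :
    ∏ l : Fin n, F l (Function.update (Function.update w p a) q b l)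
      = F q b * (F p a * ∏ l ∈ (Finset.univ \ {q}) \ {p}, F l (w l)) := by
  rw [prod_update1]
  congr 1
  have h : (fun l => F l (Function.update w p a l))
      = Function.update (fun l => F l (w l)) p (F p a) := by
    funext l
    by_cases hl : l = p
    · subst hl; simp
    · simp [Function.update_of_ne hl]
  have hp : p ∈ Finset.univ \ ({q} : Finset (Fin n)) := by simp [hpq]
  calc ∏ l ∈ Finset.univ \ {q}, F l (Function.update w p a l)
      = ∏ l ∈ Finset.univ \ {q}, Function.update (fun l => F l (w l)) p (F p a) l := by rw [h]
    _ = F p a * ∏ l ∈ (Finset.univ \ {q}) \ {p}, F l (w l) :=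
        Finset.prod_update_of_mem hp _ _

/-- restrict an "if pair then 1" product to the complement of the pair -/
lemma ifprod {n : ℕ} (p q : Fin n) (G : Fin n → ℂ) :
    (∏ l : Fin n, if (l : ℕ) = (p : ℕ) ∨ (l : ℕ) = (q : ℕ) then 1 else G l)
      = ∏ l ∈ (Finset.univ \ {q}) \ {p}, G l := by
  rw [← Finset.prod_subset (Finset.subset_univ ((Finset.univ \ {q}) \ {p}))
    (f := fun (l : Fin n) => if (l : ℕ) = (p : ℕ) ∨ (l : ℕ) = (q : ℕ) then 1 else G l)]
  · apply Finset.prod_congr rfl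
    intro l hl
    simp only [Finset.mem_sdiff, Finset.mem_singleton] at hl
    rw [if_neg]
    push_neg
    exact ⟨fun h => hl.2 (Fin.ext h), fun h => hl.1.2 (Fin.ext h)⟩
  · intro l _ hl
    simp only [Finset.mem_sdiff, Finset.mem_univ, Finset.mem_singleton, true_and, not_and,
      not_not] at hl
    by_cases h : l = q
    · rw [if_pos (Or.inr (by rw [h]))]
    · rw [if_pos (Or.inl (by rw [hl h]))]

lemma collapse2 {n : ℕ} (p q : Fin n) (hpq : p ≠ q) (c : Fin n → Fin 2)
    (g : (Fin n → Fin 2) → ℂ) :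
    ∑ z : Fin n → Fin 2,
        (∏ l : Fin n, if (l:ℕ) = (p:ℕ) ∨ (l:ℕ) = (q:ℕ) then (1:ℂ) else if z l = c l then 1 else 0)
          * g z
      = ∑ a : Fin 2, ∑ b : Fin 2, g (Function.update (Function.update c p a) q b) := by
  classical
  set u : Fin 2 × Fin 2 → (Fin n → Fin 2) :=
    fun ab => Function.update (Function.update c p ab.1) q ab.2 with hu
  set f : (Fin n → Fin 2) → ℂ := fun z =>
    (∏ l : Fin n, if (l:ℕ) = (p:ℕ) ∨ (l:ℕ) = (q:ℕ) then (1:ℂ) else if z l = c l then 1 else 0)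
      * g z with hf
  have hvalp : ∀ ab : Fin 2 × Fin 2, u ab p = ab.1 := by
    intro ab; rw [hu]; simp [Function.update_of_ne hpq]
  have hvalq : ∀ ab : Fin 2 × Fin 2, u ab q = ab.2 := by
    intro ab; rw [hu]; simp
  have hout : ∀ (ab : Fin 2 × Fin 2) (l : Fin n), l ≠ p → l ≠ q → u ab l = c l := by
    intro ab l h1 h2
    rw [hu]; simp [Function.update_of_ne h1, Function.update_of_ne h2]
  have hinj : Function.Injective u := by
    intro ab ab' h
    have h1 := congrFun h p
    have h2 := congrFun h q
    rw [hvalp ab, hvalp ab'] at h1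
    rw [hvalq ab, hvalq ab'] at h2
    exact Prod.ext h1 h2
  have himg : ∀ z : Fin n → Fin 2, z ∉ Finset.univ.image u →
      ∃ l : Fin n, l ≠ p ∧ l ≠ q ∧ z l ≠ c l := by
    intro z hz
    by_contra hcon
    push_neg at hcon
    apply hz
    refine Finset.mem_image.mpr ⟨(z p, z q), Finset.mem_univ _, ?_⟩
    funext l
    by_cases h1 : l = q
    · subst h1; exact (hvalq _)
    · by_cases h2 : l = p
      · subst h2; exact (hvalp _)
      · rw [hout _ _ h2 h1]; exact (hcon l h2 h1).symm
  calc ∑ z : Fin n → Fin 2, f z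
      = ∑ z ∈ Finset.univ.image u, f z := by
        refine (Finset.sum_subset (Finset.subset_univ _) ?_).symm
        intro z _ hz
        obtain ⟨l, h1, h2, h3⟩ := himg z hz
        refine mul_eq_zero_of_left (Finset.prod_eq_zero (Finset.mem_univ l) ?_) _
        rw [if_neg, if_neg h3]
        push_neg
        exact ⟨fun h => h1 (Fin.ext h), fun h => h2 (Fin.ext h)⟩
    _ = ∑ ab : Fin 2 × Fin 2, f (u ab) := by
        rw [Finset.sum_image (fun x _ y _ h => hinj h)]
    _ = ∑ ab : Fin 2 × Fin 2, g (u ab) := by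
        apply Finset.sum_congr rfl
        intro ab _
        rw [hf]
        simp only []
        rw [Finset.prod_eq_one, one_mul]
        intro l _
        by_cases h1 : (l:ℕ) = (p:ℕ) ∨ (l:ℕ) = (q:ℕ)
        · rw [if_pos h1]
        · push_neg at h1
          rw [if_neg (by push_neg; exact h1),
            if_pos (hout ab l (fun h => h1.1 (by rw [h])) (fun h => h1.2 (by rw [h])))]
    _ = ∑ a : Fin 2, ∑ b : Fin 2, g (Function.update (Function.update c p a) q b) := by
        rw [Fintype.sum_prod_type]

lemma collapse1 {n : ℕ} (p : Fin n) (c : Fin n → Fin 2) (g : (Fin n → Fin 2) → ℂ) :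
    ∑ z : Fin n → Fin 2,
        (∏ l : Fin n, if (l:ℕ) = (p:ℕ) then (1:ℂ) else if z l = c l then 1 else 0) * g z
      = ∑ a : Fin 2, g (Function.update c p a) := by
  classical
  set u : Fin 2 → (Fin n → Fin 2) := fun a => Function.update c p a with hu
  set f : (Fin n → Fin 2) → ℂ := fun z =>
    (∏ l : Fin n, if (l:ℕ) = (p:ℕ) then (1:ℂ) else if z l = c l then 1 else 0) * g z with hf
  have hinj : Function.Injective u := by
    intro a a' h
    have h1 := congrFun h p
    rw [hu] at h1
    simpa using h1
  have himg : ∀ z : Fin n → Fin 2, z ∉ Finset.univ.image u →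
      ∃ l : Fin n, l ≠ p ∧ z l ≠ c l := by
    intro z hz
    by_contra hcon
    push_neg at hcon
    apply hz
    refine Finset.mem_image.mpr ⟨z p, Finset.mem_univ _, ?_⟩
    funext l
    by_cases h2 : l = p
    · subst h2; simp [hu]
    · rw [hu]; simp only [Function.update_of_ne h2]; exact (hcon l h2).symm
  calc ∑ z : Fin n → Fin 2, f z
      = ∑ z ∈ Finset.univ.image u, f z := by
        refine (Finset.sum_subset (Finset.subset_univ _) ?_).symm
        intro z _ hz
        obtain ⟨l, h1, h3⟩ := himg z hz
        refine mul_eq_zero_of_left (Finset.prod_eq_zero (Finset.mem_univ l) ?_) _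
        rw [if_neg (fun h => h1 (Fin.ext h)), if_neg h3]
    _ = ∑ a : Fin 2, f (u a) := by
        rw [Finset.sum_image (fun x _ y _ h => hinj h)]
    _ = ∑ a : Fin 2, g (u a) := by
        apply Finset.sum_congr rfl
        intro a _
        rw [hf]
        simp only []
        rw [Finset.prod_eq_one, one_mul]
        intro l _
        by_cases h1 : (l:ℕ) = (p:ℕ)
        · rw [if_pos h1]
        · rw [if_neg h1, if_pos (by rw [hu]; exact Function.update_of_ne (fun h => h1 (by rw [h])) _ _)]

lemma pair_mul_prod {n j : ℕ} (h : j + 1 < n) (M : Matrix (Fin 2 × Fin 2) (Fin 2 × Fin 2) ℂ)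
    (P : ℕ → Matrix (Fin 2) (Fin 2) ℂ) :
    pairOp n j M * prodOp n P = mixedOp n j (M * kron (P j) (P (j + 1))) P := by
  ext x y
  set p : Fin n := ⟨j, Nat.lt_of_succ_lt h⟩ with hp
  set q : Fin n := ⟨j + 1, h⟩ with hq
  have hpq : p ≠ q := by simp [hp, hq, Fin.ext_iff]
  rw [Matrix.mul_apply]
  simp only [pairOp, mixedOp, h, ↓reduceDIte, prodOp]
  have step1 : ∀ z : Fin n → Fin 2,
      (M (x p, x q) (z p, z q) *
          ∏ l : Fin n, if (l:ℕ) = j ∨ (l:ℕ) = j + 1 then (1:ℂ) else if x l = z l then 1 else 0)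
        * ∏ l : Fin n, P l (z l) (y l)
      = (∏ l : Fin n, if (l:ℕ) = (p:ℕ) ∨ (l:ℕ) = (q:ℕ) then (1:ℂ)
            else if z l = x l then 1 else 0)
        * (M (x p, x q) (z p, z q) * ∏ l : Fin n, P l (z l) (y l)) := by
    intro z
    have hprod : (∏ l : Fin n, if (l:ℕ) = j ∨ (l:ℕ) = j + 1 then (1:ℂ)
            else if x l = z l then 1 else 0)
        = ∏ l : Fin n, if (l:ℕ) = (p:ℕ) ∨ (l:ℕ) = (q:ℕ) then (1:ℂ)
            else if z l = x l then 1 else 0 :=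
      Finset.prod_congr rfl (fun l _ => if_congr Iff.rfl rfl (if_congr eq_comm rfl rfl))
    rw [hprod]
    ring
  rw [Finset.sum_congr rfl (fun z _ => step1 z),
    collapse2 p q hpq x (fun z => M (x p, x q) (z p, z q) * ∏ l : Fin n, P l (z l) (y l))]
  rw [Matrix.mul_apply, Fintype.sum_prod_type, ifprod p q, Finset.sum_mul]
  apply Finset.sum_congr rfl
  intro a _
  rw [Finset.sum_mul]
  apply Finset.sum_congr rfl
  intro b _
  have hzp : Function.update (Function.update x p a) q b p = a := by
    simp [Function.update_of_ne hpq]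
  have hzq : Function.update (Function.update x p a) q b q = b := by simp
  rw [hzp, hzq, prod_update2 (fun l v => P l v (y l)) x p q hpq a b]
  simp only [kron]
  ring

lemma prod_mul_pair {n j : ℕ} (h : j + 1 < n) (M : Matrix (Fin 2 × Fin 2) (Fin 2 × Fin 2) ℂ)
    (P : ℕ → Matrix (Fin 2) (Fin 2) ℂ) :
    prodOp n P * pairOp n j M = mixedOp n j (kron (P j) (P (j + 1)) * M) P := by
  ext x y
  set p : Fin n := ⟨j, Nat.lt_of_succ_lt h⟩ with hp
  set q : Fin n := ⟨j + 1, h⟩ with hq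
  have hpq : p ≠ q := by simp [hp, hq, Fin.ext_iff]
  rw [Matrix.mul_apply]
  simp only [pairOp, mixedOp, h, ↓reduceDIte, prodOp]
  have step1 : ∀ z : Fin n → Fin 2,
      (∏ l : Fin n, P l (x l) (z l)) *
        (M (z p, z q) (y p, y q) *
          ∏ l : Fin n, if (l:ℕ) = j ∨ (l:ℕ) = j + 1 then (1:ℂ) else if z l = y l then 1 else 0)
      = (∏ l : Fin n, if (l:ℕ) = (p:ℕ) ∨ (l:ℕ) = (q:ℕ) then (1:ℂ)
            else if z l = y l then 1 else 0)
        * ((∏ l : Fin n, P l (x l) (z l)) * M (z p, z q) (y p, y q)) := by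
    intro z
    ring
  rw [Finset.sum_congr rfl (fun z _ => step1 z),
    collapse2 p q hpq y (fun z => (∏ l : Fin n, P l (x l) (z l)) * M (z p, z q) (y p, y q))]
  rw [Matrix.mul_apply, Fintype.sum_prod_type, ifprod p q, Finset.sum_mul]
  apply Finset.sum_congr rfl
  intro a _
  rw [Finset.sum_mul]
  apply Finset.sum_congr rfl
  intro b _
  have hzp : Function.update (Function.update y p a) q b p = a := by
    simp [Function.update_of_ne hpq]
  have hzq : Function.update (Function.update y p a) q b q = b := by simp
  rw [hzp, hzq, prod_update2 (fun l v => P l (x l) v) y p q hpq a b]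
  simp only [kron]
  ring

lemma one_mul_one {n j : ℕ} (h : j + 1 < n) (A B : Matrix (Fin 2) (Fin 2) ℂ) :
    oneOp n j A * oneOp n (j + 1) B = pairOp n j (kron A B) := by
  ext x y
  set p : Fin n := ⟨j, Nat.lt_of_succ_lt h⟩ with hp
  set q : Fin n := ⟨j + 1, h⟩ with hq
  have hpq : p ≠ q := by simp [hp, hq, Fin.ext_iff]
  rw [Matrix.mul_apply]
  simp only [oneOp, pairOp, h, Nat.lt_of_succ_lt h, ↓reduceDIte]
  have step1 : ∀ z : Fin n → Fin 2,
      (A (x p) (z p) * ∏ l : Fin n, if (l:ℕ) = j then (1:ℂ) else if x l = z l then 1 else 0) *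
        (B (z q) (y q) * ∏ l : Fin n, if (l:ℕ) = j + 1 then (1:ℂ) else if z l = y l then 1 else 0)
      = (∏ l : Fin n, if (l:ℕ) = (q:ℕ) then (1:ℂ) else if z l = y l then 1 else 0) *
        (A (x p) (z p) * B (z q) (y q) *
          ∏ l : Fin n, if (l:ℕ) = j then (1:ℂ) else if x l = z l then 1 else 0) := by
    intro z; ring
  rw [Finset.sum_congr rfl (fun z _ => step1 z),
    collapse1 q y (fun z => A (x p) (z p) * B (z q) (y q) *
      ∏ l : Fin n, if (l:ℕ) = j then (1:ℂ) else if x l = z l then 1 else 0)]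
  have hup : ∀ b : Fin 2, Function.update y q b p = y p :=
    fun b => Function.update_of_ne hpq _ _
  have huq : ∀ b : Fin 2, Function.update y q b q = b := fun b => Function.update_self _ _ _
  have hD : ∀ b : Fin 2,
      (∏ l : Fin n, if (l:ℕ) = j then (1:ℂ) else if x l = Function.update y q b l then 1 else 0)
      = (if x q = b then (1:ℂ) else 0) *
          ∏ l ∈ Finset.univ \ {q}, (if (l:ℕ) = j then (1:ℂ) else if x l = y l then 1 else 0) := by
    intro b
    have := prod_update1 (fun l v => if (l:ℕ) = j then (1:ℂ) else if x l = v then 1 else 0) y q b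
    rw [this]
    congr 1
    rw [if_neg (show ¬((q:ℕ) = j) by simp [hq])]
  have hsum : ∀ b : Fin 2,
      A (x p) (Function.update y q b p) * B (Function.update y q b q) (y q) *
        ∏ l : Fin n, (if (l:ℕ) = j then (1:ℂ) else if x l = Function.update y q b l then 1 else 0)
      = if x q = b then
          A (x p) (y p) * B b (y q) *
            ∏ l ∈ Finset.univ \ {q}, (if (l:ℕ) = j then (1:ℂ) else if x l = y l then 1 else 0)
        else 0 := by
    intro b
    rw [hup, huq, hD]
    split_ifs with hxb
    · ring
    · ring
  rw [Finset.sum_congr rfl (fun b _ => hsum b), Finset.sum_ite_eq, if_pos (Finset.mem_univ _)]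
  have hE : (∏ l : Fin n, if (l:ℕ) = j ∨ (l:ℕ) = j + 1 then (1:ℂ) else if x l = y l then 1 else 0)
      = ∏ l ∈ Finset.univ \ {q}, (if (l:ℕ) = j then (1:ℂ) else if x l = y l then 1 else 0) := by
    rw [← Finset.prod_subset (Finset.sdiff_subset)
      (f := fun l : Fin n => if (l:ℕ) = j ∨ (l:ℕ) = j + 1 then (1:ℂ) else if x l = y l then 1 else 0)]
    · apply Finset.prod_congr rfl
      intro l hl
      simp only [Finset.mem_sdiff, Finset.mem_singleton] at hl
      by_cases h1 : (l:ℕ) = j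
      · rw [if_pos (Or.inl h1), if_pos h1]
      · rw [if_neg h1, if_neg]
        push_neg
        exact ⟨h1, fun hc => hl.2 (Fin.ext (by simp [hq, hc]))⟩
    · intro l _ hl
      simp only [Finset.mem_sdiff, Finset.mem_univ, Finset.mem_singleton, true_and,
        not_not] at hl
      rw [if_pos (Or.inr (by simp [hl, hq]))]
  rw [hE]
  simp only [kron]
  rfl

/-- explicit form of R² -/
lemma RR_eq : R * R = kron !![0,1;-1,0] !![0,1;1,0] := by
  have h2 : ((Real.sqrt 2 : ℝ) : ℂ) * ((Real.sqrt 2 : ℝ) : ℂ) = 2 := by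
    norm_cast
    rw [Real.mul_self_sqrt (by norm_num)]
  have hsq : ((Real.sqrt 2 : ℝ) : ℂ) ^ 2 = 2 := by rw [sq]; exact h2
  ext ⟨p1, p2⟩ ⟨q1, q2⟩
  rw [Matrix.mul_apply, Fintype.sum_prod_type]
  simp only [R, R4, kron, Matrix.smul_apply, smul_eq_mul, Fin.sum_univ_two]
  fin_cases p1 <;> fin_cases p2 <;> fin_cases q1 <;> fin_cases q2 <;>
    · norm_num [Matrix.cons_val', Matrix.cons_val_zero, Matrix.cons_val_one, Matrix.head_cons,
        Matrix.head_fin_const, Matrix.cons_val_fin_one, Matrix.empty_val',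
        Matrix.cons_val_succ, Fin.mk_one]
      try field_simp
      try ring_nf
      try rw [hsq]
      try simp [hsq]

lemma fact1 : (R * R) * kron Ps Px = kron Ps Px * (Complex.I • kron sigmaZ sigmaZ) := by
  rw [RR_eq]
  ext ⟨p1, p2⟩ ⟨q1, q2⟩
  rw [Matrix.mul_apply, Matrix.mul_apply, Fintype.sum_prod_type, Fintype.sum_prod_type]
  simp only [kron, Ps, Px, sigmaZ, Matrix.smul_apply, smul_eq_mul, Fin.sum_univ_two]
  fin_cases p1 <;> fin_cases p2 <;> fin_cases q1 <;> fin_cases q2 <;>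
    · norm_num [Matrix.cons_val', Matrix.cons_val_zero, Matrix.cons_val_one, Matrix.head_cons,
        Matrix.head_fin_const, Matrix.cons_val_fin_one, Matrix.empty_val']
      try ring

lemma fact2 : (R * R) * kron Px Ps = kron Px Ps * (R * R) := by
  rw [RR_eq]
  ext ⟨p1, p2⟩ ⟨q1, q2⟩
  rw [Matrix.mul_apply, Matrix.mul_apply, Fintype.sum_prod_type, Fintype.sum_prod_type]
  simp only [kron, Ps, Px, Matrix.smul_apply, smul_eq_mul, Fin.sum_univ_two]
  fin_cases p1 <;> fin_cases p2 <;> fin_cases q1 <;> fin_cases q2 <;>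
    · norm_num [Matrix.cons_val', Matrix.cons_val_zero, Matrix.cons_val_one, Matrix.head_cons,
        Matrix.head_fin_const, Matrix.cons_val_fin_one, Matrix.empty_val']
      try ring

lemma fact3 : (R * R) * kron Px 1 = kron Px 1 * (R * R) := by
  rw [RR_eq]
  ext ⟨p1, p2⟩ ⟨q1, q2⟩
  rw [Matrix.mul_apply, Matrix.mul_apply, Fintype.sum_prod_type, Fintype.sum_prod_type]
  simp only [kron, Ps, Px, Matrix.smul_apply, smul_eq_mul, Fin.sum_univ_two, Matrix.one_apply]
  fin_cases p1 <;> fin_cases p2 <;> fin_cases q1 <;> fin_cases q2 <;>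
    · norm_num [Matrix.cons_val', Matrix.cons_val_zero, Matrix.cons_val_one, Matrix.head_cons,
        Matrix.head_fin_const, Matrix.cons_val_fin_one, Matrix.empty_val']
      try ring

noncomputable def Pf (n : ℕ) : ℕ → Matrix (Fin 2) (Fin 2) ℂ := fun j =>
  if j % 2 = 1 then Px else if j + 1 < n then Ps else 1

noncomputable def Psi : Matrix (Fin 2) (Fin 2) ℂ :=
  (2:ℂ)⁻¹ • !![1, -Complex.I; -Complex.I, 1]

noncomputable def Pxi : Matrix (Fin 2) (Fin 2) ℂ := (2:ℂ)⁻¹ • !![1, 1; -1, 1]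

noncomputable def Qf (n : ℕ) : ℕ → Matrix (Fin 2) (Fin 2) ℂ := fun j =>
  if j % 2 = 1 then Pxi else if j + 1 < n then Psi else 1

lemma Px_Pxi : Px * Pxi = 1 := by
  ext a b
  fin_cases a <;> fin_cases b <;>
    simp [Px, Pxi, Matrix.mul_apply, Fin.sum_univ_two, Matrix.one_apply] <;> ring

lemma Ps_Psi : Ps * Psi = 1 := by
  ext a b
  fin_cases a <;> fin_cases b <;>
    simp [Ps, Psi, Matrix.mul_apply, Fin.sum_univ_two, Matrix.one_apply, Complex.I_mul_I] <;>
    ring_nf <;> simp [Complex.I_sq] <;> ring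

lemma Qf_Pf (n j : ℕ) : Qf n j * Pf n j = 1 := by
  have h1 : Pxi * Px = 1 := by
    ext a b
    fin_cases a <;> fin_cases b <;>
      simp [Px, Pxi, Matrix.mul_apply, Fin.sum_univ_two, Matrix.one_apply] <;> ring
  have h2 : Psi * Ps = 1 := by
    ext a b
    fin_cases a <;> fin_cases b <;>
      simp [Ps, Psi, Matrix.mul_apply, Fin.sum_univ_two, Matrix.one_apply, Complex.I_mul_I] <;>
      ring_nf <;> simp [Complex.I_sq] <;> ring
  unfold Pf Qf
  split_ifs
  · exact h1
  · exact h2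
  · exact one_mul 1

lemma Pf_Qf (n j : ℕ) : Pf n j * Qf n j = 1 := by
  unfold Pf Qf
  split_ifs
  · exact Px_Pxi
  · exact Ps_Psi
  · exact one_mul 1

lemma Pn_eq (n : ℕ) : Pn n = prodOp n (Pf n) := by
  ext x y
  apply Finset.prod_congr rfl
  intro j _
  simp only [Pf, apply_ite (fun M : Matrix (Fin 2) (Fin 2) ℂ => M (x j) (y j))]
  by_cases h1 : (j:ℕ) % 2 = 1
  · rw [if_pos h1, if_pos h1]
  · rw [if_neg h1, if_neg h1]
    by_cases h2 : (j:ℕ) + 1 < n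
    · rw [if_pos h2, if_pos h2]
    · rw [if_neg h2, if_neg h2, Matrix.one_apply]

lemma Pn_mul_Q (n : ℕ) : Pn n * prodOp n (Qf n) = 1 := by
  rw [Pn_eq, prodOp_mul,
    show (fun j => Pf n j * Qf n j) = fun _ => (1 : Matrix (Fin 2) (Fin 2) ℂ) from
      funext (Pf_Qf n)]
  exact prodOp_one n

lemma Q_mul_Pn (n : ℕ) : prodOp n (Qf n) * Pn n = 1 := by
  rw [Pn_eq, prodOp_mul,
    show (fun j => Qf n j * Pf n j) = fun _ => (1 : Matrix (Fin 2) (Fin 2) ℂ) from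
      funext (Qf_Pf n)]
  exact prodOp_one n

lemma Pn_inv (n : ℕ) : (Pn n)⁻¹ = prodOp n (Qf n) :=
  Matrix.inv_eq_right_inv (Pn_mul_Q n)

lemma conj_eq (n : ℕ) (G X : Matrix (Fin n → Fin 2) (Fin n → Fin 2) ℂ)
    (hGX : G * Pn n = Pn n * X) : (Pn n)⁻¹ * G * Pn n = X := by
  rw [Pn_inv, mul_assoc, hGX, ← mul_assoc, Q_mul_Pn, one_mul]

/-- `Pₙ⁻¹ g_{2i+1} Pₙ = i·(I₂^{⊗2i} ⊗ σ_z ⊗ σ_z ⊗ I₂^{⊗(n−2i−2)})`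
and `Pₙ⁻¹ g_{2i} Pₙ = g_{2i}` (paper's 1-indexed `g_j` is `gMat n (j-1)`; the index
conditions are `1 ≤ 2i+1 ≤ n−1` and `1 ≤ 2i ≤ n−1`). -/
theorem stmt19 (n i : ℕ) :
    (2 * i + 1 ≤ n - 1 →
      (Pn n)⁻¹ * gMat n (2 * i) * Pn n =
        Complex.I • (oneOp n (2 * i) sigmaZ * oneOp n (2 * i + 1) sigmaZ)) ∧
    (1 ≤ 2 * i ∧ 2 * i ≤ n - 1 →
      (Pn n)⁻¹ * gMat n (2 * i - 1) * Pn n = gMat n (2 * i - 1)) := by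
  constructor
  · intro h1
    have hn : 2 * i + 1 + 1 < n + 1 := by omega
    have hn' : 2 * i + 1 < n := by omega
    apply conj_eq
    have hPfj : Pf n (2 * i) = Ps := by
      simp only [Pf]
      rw [if_neg (by omega), if_pos (by omega)]
    have hPfj1 : Pf n (2 * i + 1) = Px := by
      simp only [Pf]
      rw [if_pos (by omega)]
    rw [one_mul_one hn', Matrix.mul_smul]
    show pairOp n (2 * i) (R * R) * Pn n = _
    rw [Pn_eq, pair_mul_prod hn', prod_mul_pair hn', hPfj, hPfj1, ← mixedOp_smul, fact1,
      Matrix.mul_smul]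
  · rintro ⟨ha, hb⟩
    have hj1 : 2 * i - 1 + 1 = 2 * i := by omega
    have hn : 2 * i - 1 + 1 < n := by omega
    apply conj_eq
    have hPfj : Pf n (2 * i - 1) = Px := by
      simp only [Pf]
      rw [if_pos (by omega)]
    show pairOp n (2 * i - 1) (R * R) * Pn n = Pn n * pairOp n (2 * i - 1) (R * R)
    rw [Pn_eq, pair_mul_prod hn, prod_mul_pair hn, hPfj]
    by_cases hc : 2 * i - 1 + 1 + 1 < n
    · have hK : Pf n (2 * i - 1 + 1) = Ps := by
        simp only [Pf]
        rw [if_neg (by omega), if_pos hc]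
      rw [hK, fact2]
    · have hK : Pf n (2 * i - 1 + 1) = 1 := by
        simp only [Pf]
        rw [if_neg (by omega), if_neg hc]
      rw [hK, fact3]
end
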